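/- Let T be a tree containing a path of length at least three that is internally disjoint from some diametrical path of T. Then Γ_b(T) > diam(T). -/

import Mathlib

namespace AJC

variable {V : Type*}

/-- Eccentricity of a vertex: max distance to any vertex. -/
noncomputable def ecc [Fintype V] (G : SimpleGraph V) (v : V) : ℕ :=
  Finset.univ.sup (fun u => G.dist v u)

/-- Diameter: max eccentricity. -/
noncomputable def diam [Fintype V] (G : SimpleGraph V) : ℕ :=
  Finset.univ.sup (fun v => ecc G v)

/-- Radius: minimum eccentricity. -/
noncomputable def rad [Fintype V] (G : SimpleGraph V) : ℕ :=
  sInf (Set.range (ecc G))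

/-- A broadcast on `G`. -/
def IsBroadcast [Fintype V] (G : SimpleGraph V) (f : V → ℕ) : Prop :=
  ∀ v, f v ≤ ecc G v

/-- `u` hears the broadcast `f` (is dominated by `f`). -/
def Hears (G : SimpleGraph V) (f : V → ℕ) (u : V) : Prop :=
  ∃ v, 1 ≤ f v ∧ G.dist v u ≤ f v

/-- A dominating broadcast. -/
def IsDomBroadcast [Fintype V] (G : SimpleGraph V) (f : V → ℕ) : Prop :=
  IsBroadcast G f ∧ ∀ u, Hears G f u

/-- A minimal dominating broadcast: no strictly smaller broadcast is dominating. -/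
def IsMinDomBroadcast [Fintype V] (G : SimpleGraph V) (f : V → ℕ) : Prop :=
  IsDomBroadcast G f ∧ ∀ f' : V → ℕ, f' < f → ¬ IsDomBroadcast G f'

/-- The cost of a broadcast. -/
def cost [Fintype V] (f : V → ℕ) : ℕ := ∑ v, f v

/-- The upper broadcast domination number `Γ_b`. -/
noncomputable def upperBroadcastNum [Fintype V] (G : SimpleGraph V) : ℕ :=
  sSup {n | ∃ f : V → ℕ, IsMinDomBroadcast G f ∧ cost f = n}

/-- The broadcast domination number `γ_b`. -/
noncomputable def broadcastNum [Fintype V] (G : SimpleGraph V) : ℕ :=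
  sInf {n | ∃ f : V → ℕ, IsDomBroadcast G f ∧ cost f = n}

/-- The `f`-neighbourhood of `v`. -/
def Nf (G : SimpleGraph V) (f : V → ℕ) (v : V) : Set V := {u | G.dist v u ≤ f v}

/-- The `f`-boundary of `v`. -/
def Bf (G : SimpleGraph V) (f : V → ℕ) (v : V) : Set V := {u | G.dist v u = f v}

/-- The `f`-private neighbourhood of `v`. -/
def PN (G : SimpleGraph V) (f : V → ℕ) (v : V) : Set V :=
  {u | G.dist v u ≤ f v ∧ ∀ w, w ≠ v → 1 ≤ f w → ¬ G.dist w u ≤ f w}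

/-- The `f`-private boundary of `v`: vertices in `N_f[v]` not dominated once the
broadcast at `v` is decreased by one. -/
def PB [DecidableEq V] (G : SimpleGraph V) (f : V → ℕ) (v : V) : Set V :=
  {u | G.dist v u ≤ f v ∧ ¬ Hears G (Function.update f v (f v - 1)) u}

/-- A dominating set of vertices. -/
def IsDomSet (G : SimpleGraph V) (S : Finset V) : Prop :=
  ∀ v, v ∈ S ∨ ∃ u ∈ S, G.Adj u v

/-- A minimal dominating set. -/
def IsMinDomSet (G : SimpleGraph V) (S : Finset V) : Prop :=
  IsDomSet G S ∧ ∀ T ⊂ S, ¬ IsDomSet G T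

/-- An independent set of vertices. -/
def IsIndepSet (G : SimpleGraph V) (S : Finset V) : Prop :=
  ∀ u ∈ S, ∀ w ∈ S, u ≠ w → ¬ G.Adj u w

/-- The upper domination number `Γ`. -/
noncomputable def upperDomNum [Fintype V] (G : SimpleGraph V) : ℕ :=
  sSup {n | ∃ S : Finset V, IsMinDomSet G S ∧ S.card = n}

/-- The domination number `γ`. -/
noncomputable def domNum [Fintype V] (G : SimpleGraph V) : ℕ :=
  sInf {n | ∃ S : Finset V, IsDomSet G S ∧ S.card = n}

/-- The independence number `α`. -/
noncomputable def indepNum [Fintype V] (G : SimpleGraph V) : ℕ :=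
  sSup {n | ∃ S : Finset V, IsIndepSet G S ∧ S.card = n}

/-- Given a diametrical path `v 0, …, v d` of a tree, `sideTree G d v i` is the set of
vertices connected to `v i` by a path internally disjoint from the diametrical path. -/
def sideTree (G : SimpleGraph V) (d : ℕ) (v : ℕ → V) (i : ℕ) : Set V :=
  {x | ∃ p : G.Walk x (v i), p.IsPath ∧ ∀ y ∈ p.support, y ≠ v i → ∀ j ≤ d, v j ≠ y}

/-- The diameter of the subtree `T_i`. -/
noncomputable def sideDiam (G : SimpleGraph V) (d : ℕ) (v : ℕ → V) (i : ℕ) : ℕ :=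
  sSup {n | ∃ x ∈ sideTree G d v i, ∃ y ∈ sideTree G d v i, G.dist x y = n}

/-- The eccentricity of a vertex `x` within the subtree `T_i`. -/
noncomputable def sideEcc (G : SimpleGraph V) (d : ℕ) (v : ℕ → V) (i : ℕ) (x : V) : ℕ :=
  sSup {n | ∃ y ∈ sideTree G d v i, G.dist x y = n}

/-- A leaf of `G`. -/
def IsLeaf [Fintype V] (G : SimpleGraph V) [DecidableRel G.Adj] (x : V) : Prop :=
  G.degree x = 1

/-- A stem: a vertex adjacent to a leaf. -/
def IsStem [Fintype V] (G : SimpleGraph V) [DecidableRel G.Adj] (x : V) : Prop :=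
  ∃ l, IsLeaf G l ∧ G.Adj x l

/-- A strong stem: a vertex adjacent to at least two leaves. -/
def IsStrongStem [Fintype V] (G : SimpleGraph V) [DecidableRel G.Adj] (x : V) : Prop :=
  ∃ l₁ l₂, l₁ ≠ l₂ ∧ IsLeaf G l₁ ∧ IsLeaf G l₂ ∧ G.Adj x l₁ ∧ G.Adj x l₂


end AJC

set_option linter.unusedSectionVars false
namespace AJCAux

open SimpleGraph Finset

variable {V : Type*} [DecidableEq V] {G : SimpleGraph V}

section TreeBasics

variable (hT : G.IsTree)
include hT

lemma path_length_eq_dist {x y : V} (p : G.Walk x y) (hp : p.IsPath) :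
    p.length = G.dist x y := by
  refine le_antisymm ?_ (SimpleGraph.dist_le p)
  obtain ⟨q, hq⟩ := hT.isConnected.exists_walk_length_eq_dist x y
  have huniq := hT.existsUnique_path x y
  have : p = q.bypass := (huniq.unique hp q.bypass_isPath)
  calc p.length = q.bypass.length := by rw [this]
    _ ≤ q.length := q.length_bypass_le
    _ = G.dist x y := hq

noncomputable def pth (x y : V) : G.Walk x y := (hT.existsUnique_path x y).exists.choose

lemma pth_isPath (x y : V) : (pth hT x y).IsPath := (hT.existsUnique_path x y).exists.choose_spec

lemma pth_unique {x y : V} (p : G.Walk x y) (hp : p.IsPath) : p = pth hT x y :=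
  ((hT.existsUnique_path x y).unique hp (pth_isPath hT x y))

lemma pth_length (x y : V) : (pth hT x y).length = G.dist x y :=
  path_length_eq_dist hT _ (pth_isPath hT x y)

lemma dist_eq_zero_iff' {x y : V} : G.dist x y = 0 ↔ x = y :=
  hT.isConnected.dist_eq_zero_iff

lemma adj_dist_eq_one {x y : V} (h : G.Adj x y) : G.dist x y = 1 :=
  SimpleGraph.dist_eq_one_iff_adj.mpr h

lemma dist_add_of_mem_support {x u y : V} (hy : y ∈ (pth hT x u).support) :
    G.dist x u = G.dist x y + G.dist y u := by
  set p := pth hT x u with hp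
  have hsp := (pth_isPath hT x u)
  have ht : (p.takeUntil y hy).IsPath := hsp.takeUntil hy
  have hd : (p.dropUntil y hy).IsPath := hsp.dropUntil hy
  have hlen : (p.takeUntil y hy).length + (p.dropUntil y hy).length = p.length := by
    have := congrArg Walk.length (p.take_spec hy)
    rwa [SimpleGraph.Walk.length_append] at this
  rw [← pth_length hT x u, ← path_length_eq_dist hT _ ht, ← path_length_eq_dist hT _ hd, ← hp]
  omega

lemma dist_le_of_mem_support {x u y : V} (hy : y ∈ (pth hT x u).support) :
    G.dist x y ≤ G.dist x u := by
  have := dist_add_of_mem_support hT hy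
  omega

omit hT in
lemma isPath_concat {x y z : V} {p : G.Walk x y} (hp : p.IsPath) (h : G.Adj y z)
    (hz : z ∉ p.support) : (p.concat h).IsPath := by
  rw [← SimpleGraph.Walk.isPath_reverse_iff, SimpleGraph.Walk.reverse_concat]
  exact SimpleGraph.Walk.IsPath.cons hp.reverse
    (by rwa [SimpleGraph.Walk.support_reverse, List.mem_reverse])

lemma dichotomy {y b : V} (hyb : G.Adj y b) (u : V) :
    G.dist u y = G.dist u b + 1 ∨ G.dist u b = G.dist u y + 1 := by
  by_cases hb : b ∈ (pth hT u y).support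
  · left
    have h1 := dist_add_of_mem_support hT hb
    have h2 : G.dist b y = 1 := adj_dist_eq_one hT (hyb.symm)
    omega
  · right
    have hq : ((pth hT u y).concat hyb).IsPath := isPath_concat (pth_isPath hT u y) hyb hb
    have := path_length_eq_dist hT _ hq
    rw [SimpleGraph.Walk.length_concat, pth_length] at this
    omega

end TreeBasics

/-- The branch of the tree at `y` in the direction of `b`. -/
noncomputable def Br (G : SimpleGraph V) [Fintype V] (y b : V) : Finset V :=
  univ.filter (fun u => u ≠ y ∧ G.dist u b + 1 = G.dist u y)

variable [Fintype V]

lemma mem_Br {y b u : V} : u ∈ Br G y b ↔ u ≠ y ∧ G.dist u b + 1 = G.dist u y := by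
  simp [Br]

section BranchLemmas

variable (hT : G.IsTree)
include hT

lemma b_mem_Br {y b : V} (hyb : G.Adj y b) : b ∈ Br G y b := by
  rw [mem_Br]
  refine ⟨hyb.ne', ?_⟩
  rw [SimpleGraph.dist_self, SimpleGraph.dist_comm, adj_dist_eq_one hT hyb]

omit hT in
lemma y_not_mem_Br {y b : V} : y ∉ Br G y b := by
  simp [mem_Br]

omit hT in
lemma Br_ne_y {y b u : V} (h : u ∈ Br G y b) : u ≠ y := (mem_Br.mp h).1

/-- The canonical path from `y` to a vertex in the branch starts with the edge to `b`. -/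
lemma consDec {y b u : V} (hyb : G.Adj y b) (hu : u ∈ Br G y b) :
    y ∉ (pth hT b u).support ∧ pth hT y u = SimpleGraph.Walk.cons hyb (pth hT b u) := by
  obtain ⟨hne, hd⟩ := mem_Br.mp hu
  have hy : y ∉ (pth hT b u).support := by
    intro h
    have h1 := dist_add_of_mem_support hT h
    have h2 : G.dist b y = 1 := adj_dist_eq_one hT hyb.symm
    have e1 : G.dist u b = G.dist b u := SimpleGraph.dist_comm
    have e2 : G.dist u y = G.dist y u := SimpleGraph.dist_comm
    omega
  refine ⟨hy, ?_⟩
  exact (pth_unique hT _ (SimpleGraph.Walk.IsPath.cons (pth_isPath hT b u) hy)).symm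

lemma exists_branch {y u : V} (hne : u ≠ y) : ∃ b, G.Adj y b ∧ u ∈ Br G y b := by
  have hlen : (pth hT y u).length = G.dist y u := pth_length hT y u
  obtain ⟨b, h, q, hq⟩ : ∃ (b : V) (h : G.Adj y b) (q : G.Walk b u),
      pth hT y u = SimpleGraph.Walk.cons h q := by
    cases hpp : pth hT y u with
    | nil => exact absurd rfl hne.symm
    | cons h q => exact ⟨_, h, q, rfl⟩
  have hqp : q.IsPath := by
    have := pth_isPath hT y u
    rw [hq] at this
    exact this.of_cons
  have hql : q.length = G.dist b u := path_length_eq_dist hT q hqp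
  have : G.dist y u = q.length + 1 := by
    rw [← hlen, hq, SimpleGraph.Walk.length_cons]
  refine ⟨b, h, mem_Br.mpr ⟨hne, ?_⟩⟩
  rw [SimpleGraph.dist_comm (u := u) (v := b), SimpleGraph.dist_comm (u := u) (v := y)]
  omega

lemma propagation {y b s s' : V} (hyb : G.Adj y b) (hs : s ∈ Br G y b)
    (hadj : G.Adj s s') (hne : s' ≠ y) : s' ∈ Br G y b := by
  obtain ⟨hsy, hsd⟩ := mem_Br.mp hs
  rcases dichotomy hT hadj y with h | h
  · -- dist y s = dist y s' + 1 : s' is closer to y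
    obtain ⟨c₀, h₀, q₀, hq₀⟩ : ∃ (c₀ : V) (h₀ : G.Adj y c₀) (q₀ : G.Walk c₀ s'),
        pth hT y s' = SimpleGraph.Walk.cons h₀ q₀ := by
      cases hpp : pth hT y s' with
      | nil => exact absurd rfl hne.symm
      | cons h q => exact ⟨_, h, q, rfl⟩
    have hq₀p : q₀.IsPath := by
      have := pth_isPath hT y s'; rw [hq₀] at this; exact this.of_cons
    have hynq₀ : y ∉ q₀.support := by
      have := pth_isPath hT y s'; rw [hq₀, SimpleGraph.Walk.cons_isPath_iff] at this
      exact this.2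
    -- build path y → s through s'
    have hsns : s ∉ (pth hT y s').support := by
      intro hc
      have := dist_le_of_mem_support hT hc
      omega
    have hP : ((pth hT y s').concat hadj.symm).IsPath :=
      isPath_concat (pth_isPath hT y s') hadj.symm hsns
    have hPU : (pth hT y s').concat hadj.symm = pth hT y s := pth_unique hT _ hP
    obtain ⟨_, hcd⟩ := consDec hT hyb hs
    -- two cons decompositions of pth y s
    rw [hq₀, SimpleGraph.Walk.concat_cons] at hPU
    rw [hcd] at hPU
    have hsup := congrArg SimpleGraph.Walk.support hPU
    rw [SimpleGraph.Walk.support_cons, SimpleGraph.Walk.support_cons] at hsup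
    have hc₀b : c₀ = b := by
      have h1 := (q₀.concat hadj.symm).support_eq_cons
      have h2 := (pth hT b s).support_eq_cons
      rw [h1, h2] at hsup
      exact (List.cons.injEq _ _ _ _).mp ((List.cons.injEq _ _ _ _).mp hsup).2 |>.1
    subst hc₀b
    -- now q₀ : Walk c₀ s' with c₀ = b
    have : q₀.length = G.dist c₀ s' := path_length_eq_dist hT q₀ hq₀p
    have hlen : G.dist y s' = q₀.length + 1 := by
      rw [← pth_length hT y s', hq₀, SimpleGraph.Walk.length_cons]
    refine mem_Br.mpr ⟨hne, ?_⟩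
    have e1 : G.dist s' c₀ = G.dist c₀ s' := SimpleGraph.dist_comm
    have e2 : G.dist s' y = G.dist y s' := SimpleGraph.dist_comm
    omega
  · -- dist y s' = dist y s + 1 : s' is further
    have hs'ns : s' ∉ (pth hT y s).support := by
      intro hc
      have := dist_le_of_mem_support hT hc
      omega
    have hP : ((pth hT y s).concat hadj).IsPath :=
      isPath_concat (pth_isPath hT y s) hadj hs'ns
    have hPU : (pth hT y s).concat hadj = pth hT y s' := pth_unique hT _ hP
    obtain ⟨_, hcd⟩ := consDec hT hyb hs
    rw [hcd, SimpleGraph.Walk.concat_cons] at hPU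
    -- pth y s' = cons hyb ((pth b s).concat hadj)
    have hinner : ((pth hT b s).concat hadj).IsPath := by
      have := pth_isPath hT y s'
      rw [← hPU] at this
      exact this.of_cons
    have hil : ((pth hT b s).concat hadj).length = G.dist b s' :=
      path_length_eq_dist hT _ hinner
    rw [SimpleGraph.Walk.length_concat, pth_length] at hil
    refine mem_Br.mpr ⟨hne, ?_⟩
    have e1 : G.dist s' b = G.dist b s' := SimpleGraph.dist_comm
    have e2 : G.dist s b = G.dist b s := SimpleGraph.dist_comm
    have e3 : G.dist s y = G.dist y s := SimpleGraph.dist_comm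
    have e4 : G.dist s' y = G.dist y s' := SimpleGraph.dist_comm
    omega

lemma walk_propagation {y b : V} (hyb : G.Adj y b) :
    ∀ {x u' : V} (p : G.Walk x u'), x ∈ Br G y b → y ∉ p.support →
      ∀ t ∈ p.support, t ∈ Br G y b := by
  intro x u' p
  induction p with
  | nil =>
    intro hx _ t ht
    simp only [SimpleGraph.Walk.support_nil, List.mem_singleton] at ht
    rwa [ht]
  | @cons a c u'' h q ih =>
    intro hx hy t ht
    rw [SimpleGraph.Walk.support_cons, List.mem_cons] at ht
    rw [SimpleGraph.Walk.support_cons, List.mem_cons] at hy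
    push_neg at hy
    have hc : c ∈ Br G y b := by
      refine propagation hT hyb hx h ?_
      intro hcy
      exact hy.2 (hcy ▸ q.start_mem_support)
    rcases ht with rfl | ht
    · exact hx
    · exact ih hc hy.2 t ht

lemma separation {y b x u : V} (hyb : G.Adj y b) (hx : x ∈ Br G y b) (hu : u ∉ Br G y b) :
    G.dist x u = G.dist x y + G.dist y u := by
  by_cases hy : y ∈ (pth hT x u).support
  · exact dist_add_of_mem_support hT hy
  · exact absurd (walk_propagation hT hyb (pth hT x u) hx hy u
      ((pth hT x u).end_mem_support)) hu

lemma branch_unique {y b₁ b₂ u : V} (h₁a : G.Adj y b₁) (h₂a : G.Adj y b₂)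
    (h₁ : u ∈ Br G y b₁) (h₂ : u ∈ Br G y b₂) : b₁ = b₂ := by
  by_contra hne
  have hu2 : u ∉ Br G y b₁ ∨ True := Or.inr trivial
  -- use separation: if b₂-branch disjoint... direct: u ∈ Br y b₁, and if u ∉ Br y b₂ fine; here both.
  -- use consDec twice and compare supports
  obtain ⟨_, hd₁⟩ := consDec hT h₁a h₁
  obtain ⟨_, hd₂⟩ := consDec hT h₂a h₂
  rw [hd₁] at hd₂
  have hsup := congrArg SimpleGraph.Walk.support hd₂
  rw [SimpleGraph.Walk.support_cons, SimpleGraph.Walk.support_cons,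
    (pth hT b₁ u).support_eq_cons, (pth hT b₂ u).support_eq_cons] at hsup
  exact hne (((List.cons.injEq _ _ _ _).mp ((List.cons.injEq _ _ _ _).mp hsup).2).1)

lemma sub_branch {y b c : V} (hyb : G.Adj y b) (hbc : G.Adj b c) (hcy : c ≠ y) :
    ∀ u ∈ Br G b c, u ∈ Br G y b ∧ u ≠ b := by
  intro u hu
  refine ⟨?_, Br_ne_y hu⟩
  obtain ⟨hcd_mem, hcd⟩ := consDec hT hbc hu
  have hbnot : b ∉ (pth hT c u).support := by
    have := pth_isPath hT b u
    rw [hcd, SimpleGraph.Walk.cons_isPath_iff] at this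
    exact this.2
  have hynot : y ∉ (pth hT b u).support := by
    intro hy
    rw [hcd, SimpleGraph.Walk.support_cons, List.mem_cons] at hy
    rcases hy with h | h
    · exact hyb.ne' h.symm
    · have hyBr : y ∈ Br G b c := walk_propagation hT hbc (pth hT c u)
        (b_mem_Br hT hbc) hbnot y h
      obtain ⟨_, hyd⟩ := mem_Br.mp hyBr
      have : G.dist y b = 1 := adj_dist_eq_one hT hyb
      have hyc : G.dist y c ≠ 0 := by
        rw [Ne, dist_eq_zero_iff' hT]
        exact fun hh => hcy hh.symm
      omega
  have hP : (SimpleGraph.Walk.cons hyb (pth hT b u)).IsPath :=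
    SimpleGraph.Walk.IsPath.cons (pth_isPath hT b u) hynot
  have hPU : SimpleGraph.Walk.cons hyb (pth hT b u) = pth hT y u := pth_unique hT _ hP
  have hlen : G.dist y u = G.dist b u + 1 := by
    rw [← pth_length hT y u, ← hPU, SimpleGraph.Walk.length_cons, pth_length]
  have hune : u ≠ y := by
    intro h; subst h
    rw [SimpleGraph.dist_self] at hlen
    omega
  refine mem_Br.mpr ⟨hune, ?_⟩
  rw [SimpleGraph.dist_comm (u := u) (v := b), SimpleGraph.dist_comm (u := u) (v := y)]
  omega

lemma partition_below {y b u : V} (hyb : G.Adj y b) (hu : u ∈ Br G y b) (hub : u ≠ b) :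
    ∃ c, G.Adj b c ∧ c ≠ y ∧ u ∈ Br G b c := by
  obtain ⟨c, hbc, hc⟩ := exists_branch hT hub
  refine ⟨c, hbc, ?_, hc⟩
  intro h
  subst h
  obtain ⟨_, h1⟩ := mem_Br.mp hc
  obtain ⟨_, h2⟩ := mem_Br.mp hu
  omega

end BranchLemmas



section Family

variable [DecidableRel G.Adj]
variable (hT : G.IsTree)

/-- Specification of the branch family used to force large minimal broadcasts. -/
def FamSpec (G : SimpleGraph V) [Fintype V] (y b : V) (f₀ : V → ℕ) (z : V) : Prop :=
  z ∈ Br G y b ∧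
  f₀ z = G.dist y z ∧
  (∀ u ∈ Br G y b, G.dist y u ≤ G.dist y z) ∧
  (∀ v, f₀ v ≠ 0 → v ∈ Br G y b) ∧
  (∀ v, f₀ v ≤ G.dist y v) ∧
  (∀ v, v ≠ z → f₀ v ≠ 0 → f₀ v < G.dist y v) ∧
  (∀ u, (u ∈ Br G y b ∨ u = y) → ∃ x, 1 ≤ f₀ x ∧ G.dist x u ≤ f₀ x) ∧
  (∀ f : V → ℕ, (∀ v, f v ≤ f₀ v) →
    (∀ u ∈ Br G y b, ∃ x, 1 ≤ f x ∧ G.dist x u ≤ f x) →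
    (G.dist y z ≤ (∑ v, f v) + 1) ∧
    ((∃ x, 1 ≤ f x ∧ G.dist x y ≤ f x) → G.dist y z ≤ ∑ v, f v))

include hT

lemma brDist {y b v : V} (hv : v ∈ Br G y b) : G.dist y v = G.dist b v + 1 := by
  have h := (mem_Br.mp hv).2
  have e1 : G.dist v b = G.dist b v := SimpleGraph.dist_comm
  have e2 : G.dist v y = G.dist y v := SimpleGraph.dist_comm
  omega

lemma brPos {y b v : V} (hv : v ∈ Br G y b) : 1 ≤ G.dist y v := by
  have := brDist hT hv
  omega

lemma branch_family : ∀ (n : ℕ) (y b : V), G.Adj y b → (Br G y b).card ≤ n →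
    ∃ (f₀ : V → ℕ) (z : V), FamSpec G y b f₀ z := by
  intro n
  induction n with
  | zero =>
    intro y b hyb hcard
    exact absurd (Finset.card_pos.mpr ⟨b, b_mem_Br hT hyb⟩) (by omega)
  | succ n IH =>
    intro y b hyb hcard
    classical
    set ns : Finset V := univ.filter (fun c => G.Adj b c ∧ c ≠ y) with hns
    have mem_ns : ∀ c, c ∈ ns ↔ (G.Adj b c ∧ c ≠ y) := by
      intro c; simp [hns]
    -- children families
    have Hchild : ∀ c, G.Adj b c → c ≠ y → ∃ (f₀ : V → ℕ) (z : V), FamSpec G b c f₀ z := by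
      intro c hbc hcy
      apply IH b c hbc
      -- card bound
      have hsub : Br G b c ⊆ (Br G y b).erase b := by
        intro u hu
        obtain ⟨h1, h2⟩ := sub_branch hT hyb hbc hcy u hu
        exact Finset.mem_erase.mpr ⟨h2, h1⟩
      calc (Br G b c).card ≤ ((Br G y b).erase b).card := Finset.card_le_card hsub
        _ = (Br G y b).card - 1 := Finset.card_erase_of_mem (b_mem_Br hT hyb)
        _ ≤ n := by omega
    choose! F Z hFam using Hchild
    by_cases hne : ns.Nonempty
    · -- main case
      obtain ⟨cs, hcsm, hmax⟩ := ns.exists_max_image (fun c => G.dist b (Z c)) hne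
      obtain ⟨hcs_adj, hcs_ne⟩ := (mem_ns cs).mp hcsm
      obtain ⟨hZcs, hFcs, hdeep_cs, hsupp_cs, hcap_cs, hstrict_cs, hcov_cs, hQ_cs⟩ :=
        hFam cs hcs_adj hcs_ne
      set z := Z cs with hz
      set f₀' : V → ℕ := fun v => ∑ c ∈ ns, F c v with hf₀'
      -- structural facts
      have hsupp' : ∀ v, f₀' v ≠ 0 → ∃ c ∈ ns, v ∈ Br G b c ∧ f₀' v = F c v := by
        intro v hv
        rw [hf₀'] at hv
        obtain ⟨c, hc, hcv⟩ : ∃ c ∈ ns, F c v ≠ 0 := by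
          by_contra hA
          push_neg at hA
          exact hv (Finset.sum_eq_zero hA)
        obtain ⟨hadj, hney⟩ := (mem_ns c).mp hc
        obtain ⟨_, _, _, hsupp_c, _, _, _, _⟩ := hFam c hadj hney
        have hvBr : v ∈ Br G b c := hsupp_c v hcv
        refine ⟨c, hc, hvBr, ?_⟩
        rw [hf₀']
        refine Finset.sum_eq_single_of_mem c hc ?_
        intro c' hc' hcc'
        obtain ⟨hadj', hney'⟩ := (mem_ns c').mp hc'
        obtain ⟨_, _, _, hsupp_c', _, _, _, _⟩ := hFam c' hadj' hney'
        by_contra hF'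
        exact hcc' (branch_unique hT hadj' hadj (hsupp_c' v hF') hvBr)
      have hval : ∀ c ∈ ns, ∀ v ∈ Br G b c, f₀' v = F c v := by
        intro c hc v hvBr
        obtain ⟨hadj, hney⟩ := (mem_ns c).mp hc
        rw [hf₀']
        refine Finset.sum_eq_single_of_mem c hc ?_
        intro c' hc' hcc'
        obtain ⟨hadj', hney'⟩ := (mem_ns c').mp hc'
        obtain ⟨_, _, _, hsupp_c', _, _, _, _⟩ := hFam c' hadj' hney'
        by_contra hF'
        exact hcc' (branch_unique hT hadj' hadj (hsupp_c' v hF') hvBr)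
      have hsuppYB : ∀ v, f₀' v ≠ 0 → v ∈ Br G y b ∧ v ≠ b := by
        intro v hv
        obtain ⟨c, hc, hvBr, _⟩ := hsupp' v hv
        obtain ⟨hadj, hney⟩ := (mem_ns c).mp hc
        exact sub_branch hT hyb hadj hney v hvBr
      have hcap' : ∀ v, f₀' v ≤ G.dist b v := by
        intro v
        by_cases hv : f₀' v = 0
        · omega
        · obtain ⟨c, hc, hvBr, hveq⟩ := hsupp' v hv
          obtain ⟨hadj, hney⟩ := (mem_ns c).mp hc
          obtain ⟨_, _, _, _, hcap_c, _, _, _⟩ := hFam c hadj hney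
          rw [hveq]; exact hcap_c v
      have hzBr : z ∈ Br G y b := (sub_branch hT hyb hcs_adj hcs_ne z hZcs).1
      have hzb : G.dist b z ≥ 1 := brPos hT hZcs
      have hyz : G.dist y z = G.dist b z + 1 := brDist hT hzBr
      have hz'cap : f₀' z = G.dist b z := by
        rw [hval cs hcsm z hZcs]; exact hFcs
      set f₀ : V → ℕ := Function.update f₀' z (G.dist y z) with hf₀
      have hf₀ge : ∀ v, f₀' v ≤ f₀ v := by
        intro v
        rw [hf₀]
        by_cases hv : v = z
        · subst hv; rw [Function.update_self]; omega
        · rw [Function.update_of_ne hv]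
      have hf₀z : f₀ z = G.dist y z := by rw [hf₀, Function.update_self]
      have hf₀ne : ∀ v, v ≠ z → f₀ v = f₀' v := by
        intro v hv; rw [hf₀, Function.update_of_ne hv]
      -- deepest
      have hdeep : ∀ u ∈ Br G y b, G.dist y u ≤ G.dist y z := by
        intro u hu
        by_cases hub : u = b
        · rw [hub]
          have : G.dist y b = 1 := adj_dist_eq_one hT hyb
          omega
        · obtain ⟨c, hadj, hney, huBr⟩ := partition_below hT hyb hu hub
          have hc : c ∈ ns := (mem_ns c).mpr ⟨hadj, hney⟩
          obtain ⟨hZc, _, hdeep_c, _, _, _, _, _⟩ := hFam c hadj hney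
          have h1 : G.dist b u ≤ G.dist b (Z c) := hdeep_c u huBr
          have h2 : G.dist b (Z c) ≤ G.dist b z := hmax c hc
          have h3 : G.dist y u = G.dist b u + 1 := brDist hT hu
          omega
      -- lift children coverage
      have hcovlift : ∀ u, (u ∈ Br G y b ∨ u = y) → ∃ x, 1 ≤ f₀ x ∧ G.dist x u ≤ f₀ x := by
        intro u hu
        rcases hu with hu | hu2
        · by_cases hub : u = b
          · rw [hub]
            obtain ⟨x, hx1, hx2⟩ := hcov_cs b (Or.inr rfl)
            refine ⟨x, ?_, ?_⟩
            · calc 1 ≤ F cs x := hx1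
                _ ≤ f₀' x := Finset.single_le_sum (f := fun c => F c x)
                    (fun c _ => Nat.zero_le _) hcsm
                _ ≤ f₀ x := hf₀ge x
            · calc G.dist x b ≤ F cs x := hx2
                _ ≤ f₀' x := Finset.single_le_sum (f := fun c => F c x)
                    (fun c _ => Nat.zero_le _) hcsm
                _ ≤ f₀ x := hf₀ge x
          · obtain ⟨c, hadj, hney, huBr⟩ := partition_below hT hyb hu hub
            have hc : c ∈ ns := (mem_ns c).mpr ⟨hadj, hney⟩
            obtain ⟨_, _, _, _, _, _, hcov_c, _⟩ := hFam c hadj hney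
            obtain ⟨x, hx1, hx2⟩ := hcov_c u (Or.inl huBr)
            refine ⟨x, ?_, ?_⟩
            · calc 1 ≤ F c x := hx1
                _ ≤ f₀' x := Finset.single_le_sum (f := fun c' => F c' x)
                    (fun c' _ => Nat.zero_le _) hc
                _ ≤ f₀ x := hf₀ge x
            · calc G.dist x u ≤ F c x := hx2
                _ ≤ f₀' x := Finset.single_le_sum (f := fun c' => F c' x)
                    (fun c' _ => Nat.zero_le _) hc
                _ ≤ f₀ x := hf₀ge x
        · rw [hu2]
          refine ⟨z, ?_, ?_⟩
          · rw [hf₀z]; omega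
          · rw [hf₀z]
            have e1 : G.dist z y = G.dist y z := SimpleGraph.dist_comm
            omega
      refine ⟨f₀, z, hzBr, hf₀z, hdeep, ?_, ?_, ?_, hcovlift, ?_⟩
      · -- support
        intro v hv
        by_cases hvz : v = z
        · subst hvz; exact hzBr
        · rw [hf₀ne v hvz] at hv
          exact (hsuppYB v hv).1
      · -- caps
        intro v
        by_cases hvz : v = z
        · subst hvz; rw [hf₀z]
        · rw [hf₀ne v hvz]
          by_cases hv : f₀' v = 0
          · omega
          · have hvBr := (hsuppYB v hv).1
            have := hcap' v
            have := brDist hT hvBr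
            omega
      · -- strict off z
        intro v hvz hv
        rw [hf₀ne v hvz] at hv ⊢
        have hvBr := (hsuppYB v hv).1
        have := hcap' v
        have := brDist hT hvBr
        omega
      · -- the Q clause
        intro f hfle hfcov
        -- support of f within Br y b
        have hfsupp : ∀ x, f x ≠ 0 → x ∈ Br G y b := by
          intro x hx
          have h1 := hfle x
          by_cases hxz : x = z
          · subst hxz; exact hzBr
          · rw [hf₀ne x hxz] at h1
            exact (hsuppYB x (by omega)).1
        have hfb0 : ∀ x, f x ≠ 0 → x ≠ b := by
          intro x hx
          by_cases hxz : x = z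
          · subst hxz; exact fun h => by
              have := hzb
              have : z ≠ b := by
                intro hzb'
                rw [hzb'] at hZcs
                exact (Br_ne_y hZcs) rfl
              exact this h
          · have h1 := hfle x
            rw [hf₀ne x hxz] at h1
            exact (hsuppYB x (by omega)).2
        constructor
        · -- Q3
          by_cases hfz : G.dist y z ≤ f z
          · have : f z ≤ ∑ v, f v :=
              Finset.single_le_sum (f := fun v => f v) (fun v _ => Nat.zero_le _) (mem_univ z)
            omega
          · -- f z ≤ dist b z, so f is within the un-bumped caps
            have hfz' : f z ≤ G.dist b z := by
              have := hfle z; rw [hf₀z] at this; omega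
            have hfle' : ∀ v, f v ≤ f₀' v := by
              intro v
              by_cases hvz : v = z
              · subst hvz; rw [hz'cap]; exact hfz'
              · rw [← hf₀ne v hvz]; exact hfle v
            -- b is covered by f
            obtain ⟨x₀, hx₀1, hx₀2⟩ := hfcov b (b_mem_Br hT hyb)
            have hx₀Br : x₀ ∈ Br G y b := hfsupp x₀ (by omega)
            have hx₀b : x₀ ≠ b := hfb0 x₀ (by omega)
            obtain ⟨c₀, hc₀adj, hc₀ney, hx₀Brc⟩ := partition_below hT hyb hx₀Br hx₀b
            have hc₀ : c₀ ∈ ns := (mem_ns c₀).mpr ⟨hc₀adj, hc₀ney⟩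
            -- restriction of f to a child branch covers that branch
            have hrestr : ∀ c ∈ ns, (∀ v, (if v ∈ Br G b c then f v else 0) ≤ F c v) ∧
                (∀ u ∈ Br G b c, ∃ x, 1 ≤ (if x ∈ Br G b c then f x else 0) ∧
                  G.dist x u ≤ (if x ∈ Br G b c then f x else 0)) := by
              intro c hc
              obtain ⟨hadj, hney⟩ := (mem_ns c).mp hc
              constructor
              · intro v
                by_cases hv : v ∈ Br G b c
                · simp only [hv, if_true]
                  calc f v ≤ f₀' v := hfle' v
                    _ = F c v := hval c hc v hv
                · simp [hv]
              · intro u huBr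
                obtain ⟨x, hx1, hx2⟩ := hfcov u (sub_branch hT hyb hadj hney u huBr).1
                have hxBr : x ∈ Br G y b := hfsupp x (by omega)
                have hxb : x ≠ b := hfb0 x (by omega)
                obtain ⟨c'', hc''adj, hc''ney, hxBrc⟩ := partition_below hT hyb hxBr hxb
                have hcc'' : c'' = c := by
                  by_contra hccne
                  -- separation at b
                  have huNot : u ∉ Br G b c'' := by
                    intro huIn
                    exact hccne (branch_unique hT hc''adj hadj huIn huBr)
                  have hsep := separation hT hc''adj hxBrc huNot
                  have hub1 : 1 ≤ G.dist b u := brPos hT huBr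
                  have hcapx : f x ≤ G.dist b x := le_trans (hfle' x) (hcap' x)
                  have e1 : G.dist x b = G.dist b x := SimpleGraph.dist_comm
                  have e2 : G.dist b u = G.dist b u := rfl
                  omega
                subst hcc''
                exact ⟨x, by simp only [hxBrc, if_true]; exact hx1,
                  by simp only [hxBrc, if_true]; exact hx2⟩
            -- child Q at c₀ with the ball at b
            obtain ⟨hadj₀, hney₀⟩ := (mem_ns c₀).mp hc₀
            obtain ⟨hZc₀, _, _, _, _, _, _, hQ_c₀⟩ := hFam c₀ hadj₀ hney₀
            obtain ⟨hr₀le, hr₀cov⟩ := hrestr c₀ hc₀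
            have hQ₀ := hQ_c₀ (fun v => if v ∈ Br G b c₀ then f v else 0) hr₀le hr₀cov
            have hball₀ : ∃ x, 1 ≤ (if x ∈ Br G b c₀ then f x else 0) ∧
                G.dist x b ≤ (if x ∈ Br G b c₀ then f x else 0) := by
              refine ⟨x₀, ?_, ?_⟩ <;> simp only [hx₀Brc, if_true]
              · exact hx₀1
              · exact hx₀2
            have hQ₀4 : G.dist b (Z c₀) ≤ ∑ v, (if v ∈ Br G b c₀ then f v else 0) :=
              hQ₀.2 hball₀
            have hZc₀pos : 1 ≤ G.dist b (Z c₀) := brPos hT hZc₀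
            by_cases hcc : c₀ = cs
            · subst hcc
              rw [← hz] at hQ₀4
              have hsle : (∑ v, (if v ∈ Br G b c₀ then f v else 0)) ≤ ∑ v, f v := by
                apply Finset.sum_le_sum
                intro v _
                by_cases hv : v ∈ Br G b c₀ <;> simp [hv]
              omega
            · -- two disjoint branches contribute
              obtain ⟨hr₁le, hr₁cov⟩ := hrestr cs hcsm
              have hQ₁ : G.dist b z ≤ (∑ v, (if v ∈ Br G b cs then f v else 0)) + 1 :=
                (hQ_cs (fun v => if v ∈ Br G b cs then f v else 0) hr₁le hr₁cov).1
              have hsum2 : (∑ v, (if v ∈ Br G b cs then f v else 0)) +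
                  (∑ v, (if v ∈ Br G b c₀ then f v else 0)) ≤ ∑ v, f v := by
                rw [← Finset.sum_add_distrib]
                apply Finset.sum_le_sum
                intro v _
                by_cases hv1 : v ∈ Br G b cs
                · have hv2 : v ∉ Br G b c₀ := by
                    intro hv2
                    exact hcc (branch_unique hT hc₀adj hcs_adj hv2 hv1)
                  simp [hv1, hv2]
                · by_cases hv2 : v ∈ Br G b c₀ <;> simp [hv1, hv2]
              omega
        · -- Q4
          rintro ⟨x, hx1, hxy⟩
          have hxBr : x ∈ Br G y b := hfsupp x (by omega)
          have hxz : x = z := by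
            by_contra hxz
            have h1 := hfle x
            rw [hf₀ne x hxz] at h1
            have h2 := hcap' x
            have h3 := brDist hT hxBr
            have e1 : G.dist x y = G.dist y x := SimpleGraph.dist_comm
            have e2 : G.dist b x = G.dist b x := rfl
            omega
          rw [hxz] at hx1 hxy
          have hs : f z ≤ ∑ v, f v :=
            Finset.single_le_sum (f := fun v => f v) (fun v _ => Nat.zero_le _) (mem_univ z)
          have e1 : G.dist z y = G.dist y z := SimpleGraph.dist_comm
          omega
    · -- ns empty : branch is just {b}
      have hsingle : ∀ u ∈ Br G y b, u = b := by
        intro u hu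
        by_contra hub
        obtain ⟨c, hadj, hney, _⟩ := partition_below hT hyb hu hub
        exact hne ⟨c, (mem_ns c).mpr ⟨hadj, hney⟩⟩
      have hdyb : G.dist y b = 1 := adj_dist_eq_one hT hyb
      refine ⟨fun v => if v = b then 1 else 0, b, b_mem_Br hT hyb, by simp [hdyb], ?_, ?_, ?_, ?_, ?_, ?_⟩
      · intro u hu; rw [hsingle u hu]
      · intro v hv
        by_cases hvb : v = b
        · subst hvb; exact b_mem_Br hT hyb
        · simp [hvb] at hv
      · intro v
        by_cases hvb : v = b
        · subst hvb; simp [hdyb]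
        · simp [hvb]
      · intro v hvb hv
        simp [hvb] at hv
      · intro u hu
        rcases hu with hu | hu2
        · rw [hsingle u hu]
          exact ⟨b, by simp, by simp [SimpleGraph.dist_self]⟩
        · rw [hu2]
          refine ⟨b, by simp, ?_⟩
          have : G.dist b y = 1 := adj_dist_eq_one hT hyb.symm
          simp [this]
      · intro f hfle hfcov
        constructor
        · omega
        · rintro ⟨x, hx1, hxy⟩
          have hxb : x = b := by
            by_contra hxb
            have := hfle x
            simp [hxb] at this
            omega
          subst hxb
          have : f x ≤ ∑ v, f v :=
            Finset.single_le_sum (f := fun v => f v) (fun v _ => Nat.zero_le _) (mem_univ x)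
          omega

end Family


section Chains

variable (hT : G.IsTree)
include hT

lemma chain_walk (f : ℕ → V) : ∀ (k : ℕ), (∀ j, j < k → G.Adj (f j) (f (j+1))) →
    ∃ p : G.Walk (f 0) (f k), p.length = k ∧ p.support = (List.range (k+1)).map f := by
  intro k
  induction k with
  | zero =>
    intro _
    exact ⟨SimpleGraph.Walk.nil, rfl, by simp [List.range_succ]⟩
  | succ k ih =>
    intro hadjf
    obtain ⟨p, hl, hs⟩ := ih (fun j hj => hadjf j (by omega))
    refine ⟨p.concat (hadjf k (by omega)), ?_, ?_⟩
    · rw [SimpleGraph.Walk.length_concat, hl]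
    · rw [SimpleGraph.Walk.support_concat, hs, List.range_succ (n := k + 1), List.map_append]
      simp

lemma chain_dist (f : ℕ → V) (k : ℕ) (hadjf : ∀ j, j < k → G.Adj (f j) (f (j+1)))
    (hinjf : ∀ x, x ≤ k → ∀ y, y ≤ k → f x = f y → x = y) : G.dist (f 0) (f k) = k := by
  obtain ⟨p, hl, hs⟩ := chain_walk hT f k hadjf
  have hp : p.IsPath := by
    rw [SimpleGraph.Walk.isPath_def, hs]
    refine List.Nodup.map_on ?_ List.nodup_range
    intro x hx y hy hxy
    rw [List.mem_range] at hx hy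
    exact hinjf x (by omega) y (by omega) hxy
  rw [← path_length_eq_dist hT p hp, hl]

end Chains

end AJCAux

namespace AJC
open AJCAux Finset
variable {V : Type*}

/-- a path of length at least three internally disjoint from a
diametrical path forces `Γ_b(T) > diam(T)`. -/

theorem stmt19 {V : Type*} [Fintype V] [DecidableEq V] (G : SimpleGraph V)
    [DecidableRel G.Adj] (hT : G.IsTree) (d : ℕ) (v : ℕ → V)
    (hdiam : diam G = d)
    (hadj : ∀ i < d, G.Adj (v i) (v (i + 1)))
    (hinj : ∀ i ≤ d, ∀ j ≤ d, v i = v j → i = j)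
    (m : ℕ) (hm : 3 ≤ m) (w : ℕ → V)
    (hw0 : ∃ i ≤ d, w 0 = v i)
    (hwadj : ∀ j < m, G.Adj (w j) (w (j + 1)))
    (hwinj : ∀ j ≤ m, ∀ j' ≤ m, w j = w j' → j = j')
    (hoff : ∀ j, 1 ≤ j → j ≤ m → ∀ i ≤ d, v i ≠ w j) :
    diam G < upperBroadcastNum G := by
  classical
  obtain ⟨i, hid, hw0i⟩ := hw0
  -- distances along the two given paths
  have dv : ∀ a b', a ≤ b' → b' ≤ d → G.dist (v a) (v b') = b' - a := by
    intro a b' hab hbd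
    have h := chain_dist hT (fun t => v (a + t)) (b' - a)
      (fun j hj => hadj (a + j) (by omega))
      (fun x hx y hy hxy => by
        have := hinj (a + x) (by omega) (a + y) (by omega) hxy
        omega)
    simp only [Nat.add_zero] at h
    have he : a + (b' - a) = b' := by omega
    rwa [he] at h
  have dw : ∀ a b', a ≤ b' → b' ≤ m → G.dist (w a) (w b') = b' - a := by
    intro a b' hab hbd
    have h := chain_dist hT (fun t => w (a + t)) (b' - a)
      (fun j hj => hwadj (a + j) (by omega))
      (fun x hx y hy hxy => by
        have := hwinj (a + x) (by omega) (a + y) (by omega) hxy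
        omega)
    simp only [Nat.add_zero] at h
    have he : a + (b' - a) = b' := by omega
    rwa [he] at h
  -- distance from v 0 to w m
  have dv0wm : G.dist (v 0) (w m) = i + m := by
    have h := chain_dist hT (fun t => if t ≤ i then v t else w (t - i)) (i + m)
      (fun j hj => by
        beta_reduce
        by_cases hj1 : j + 1 ≤ i
        · simp only [if_pos (by omega : j ≤ i), if_pos hj1]
          exact hadj j (by omega)
        · by_cases hj2 : j ≤ i
          · have hji : j = i := by omega
            simp only [if_pos hj2, if_neg hj1]
            rw [hji]
            have h1 : i + 1 - i = 1 := by omega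
            rw [h1, ← hw0i]
            exact hwadj 0 (by omega)
          · simp only [if_neg hj2, if_neg hj1]
            have h1 := hwadj (j - i) (by omega)
            have h2 : j - i + 1 = j + 1 - i := by omega
            rwa [h2] at h1)
      (fun x hx y hy hxy => by
        beta_reduce at hxy
        by_cases hx1 : x ≤ i
        · by_cases hy1 : y ≤ i
          · rw [if_pos hx1, if_pos hy1] at hxy
            exact hinj x (by omega) y (by omega) hxy
          · rw [if_pos hx1, if_neg hy1] at hxy
            exact absurd hxy.symm (Ne.symm (hoff (y - i) (by omega) (by omega) x (by omega)))
        · by_cases hy1 : y ≤ i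
          · rw [if_neg hx1, if_pos hy1] at hxy
            exact absurd hxy (Ne.symm (hoff (x - i) (by omega) (by omega) y (by omega)))
          · rw [if_neg hx1, if_neg hy1] at hxy
            have := hwinj (x - i) (by omega) (y - i) (by omega) hxy
            omega)
    simp only [if_pos (Nat.zero_le i), if_neg (by omega : ¬ i + m ≤ i)] at h
    have he : i + m - i = m := by omega
    rwa [he] at h
  -- distance from v d to w m
  have dvdwm : G.dist (v d) (w m) = (d - i) + m := by
    have h := chain_dist hT (fun t => if t ≤ d - i then v (d - t) else w (t - (d - i)))
      ((d - i) + m)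
      (fun j hj => by
        beta_reduce
        by_cases hj1 : j + 1 ≤ d - i
        · simp only [if_pos (by omega : j ≤ d - i), if_pos hj1]
          have h1 := hadj (d - (j + 1)) (by omega)
          have h2 : d - (j + 1) + 1 = d - j := by omega
          rw [h2] at h1
          exact h1.symm
        · by_cases hj2 : j ≤ d - i
          · have hji : j = d - i := by omega
            simp only [if_pos hj2, if_neg hj1]
            rw [hji]
            have h1 : d - (d - i) = i := by omega
            have h2 : d - i + 1 - (d - i) = 1 := by omega
            rw [h1, h2, ← hw0i]
            exact hwadj 0 (by omega)
          · simp only [if_neg hj2, if_neg hj1]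
            have h1 := hwadj (j - (d - i)) (by omega)
            have h2 : j - (d - i) + 1 = j + 1 - (d - i) := by omega
            rwa [h2] at h1)
      (fun x hx y hy hxy => by
        beta_reduce at hxy
        by_cases hx1 : x ≤ d - i
        · by_cases hy1 : y ≤ d - i
          · rw [if_pos hx1, if_pos hy1] at hxy
            have := hinj (d - x) (by omega) (d - y) (by omega) hxy
            omega
          · rw [if_pos hx1, if_neg hy1] at hxy
            exact absurd hxy.symm (Ne.symm (hoff (y - (d - i)) (by omega) (by omega) (d - x) (by omega)))
        · by_cases hy1 : y ≤ d - i
          · rw [if_neg hx1, if_pos hy1] at hxy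
            exact absurd hxy (Ne.symm (hoff (x - (d - i)) (by omega) (by omega) (d - y) (by omega)))
          · rw [if_neg hx1, if_neg hy1] at hxy
            have := hwinj (x - (d - i)) (by omega) (y - (d - i)) (by omega) hxy
            omega)
    simp only [if_pos (Nat.zero_le _), if_neg (by omega : ¬ d - i + m ≤ d - i),
      Nat.sub_zero] at h
    have he : d - i + m - (d - i) = m := by omega
    rwa [he] at h
  -- eccentricity bounds give 3 ≤ i and 3 ≤ d - i
  have hecc0 : G.dist (v 0) (w m) ≤ d := by
    have h1 : G.dist (v 0) (w m) ≤ ecc G (v 0) :=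
      Finset.le_sup (f := fun u => G.dist (v 0) u) (Finset.mem_univ (w m))
    have h2 : ecc G (v 0) ≤ diam G :=
      Finset.le_sup (f := fun x => ecc G x) (Finset.mem_univ (v 0))
    omega
  have heccd : G.dist (v d) (w m) ≤ d := by
    have h1 : G.dist (v d) (w m) ≤ ecc G (v d) :=
      Finset.le_sup (f := fun u => G.dist (v d) u) (Finset.mem_univ (w m))
    have h2 : ecc G (v d) ≤ diam G :=
      Finset.le_sup (f := fun x => ecc G x) (Finset.mem_univ (v d))
    omega
  have hi3 : 3 ≤ i := by omega
  have hdi3 : 3 ≤ d - i := by omega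
  -- key distances
  have hd_v0 : G.dist (v 0) (v i) = i := by
    have := dv 0 i (by omega) hid; simpa using this
  have hd_vd : G.dist (v i) (v d) = d - i := dv i d (by omega) le_rfl
  have hd_w3 : G.dist (v i) (w 3) = 3 := by
    have := dw 0 3 (by omega) (by omega)
    rwa [hw0i] at this
  -- adjacency of the three special neighbours
  have hA_adj : G.Adj (v i) (v (i - 1)) := by
    have h1 := hadj (i - 1) (by omega)
    have h2 : i - 1 + 1 = i := by omega
    rw [h2] at h1
    exact h1.symm
  have hC_adj : G.Adj (v i) (v (i + 1)) := hadj i (by omega)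
  have hW_adj : G.Adj (v i) (w 1) := by
    have h1 := hwadj 0 (by omega)
    rwa [hw0i] at h1
  -- memberships in branches
  have hv0A : v 0 ∈ Br G (v i) (v (i - 1)) := by
    rw [mem_Br]
    constructor
    · intro h
      have := hinj 0 (by omega) i hid h
      omega
    · have h1 := dv 0 (i - 1) (by omega) (by omega)
      have h2 := dv 0 i (by omega) hid
      simp only [Nat.sub_zero] at h1 h2
      omega
  have hvdC : v d ∈ Br G (v i) (v (i + 1)) := by
    rw [mem_Br]
    constructor
    · intro h
      have := hinj d le_rfl i hid h
      omega
    · have h1 := dv (i + 1) d (by omega) le_rfl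
      have h2 := dv i d (by omega) le_rfl
      have e1 : G.dist (v d) (v (i + 1)) = G.dist (v (i + 1)) (v d) := SimpleGraph.dist_comm
      have e2 : G.dist (v d) (v i) = G.dist (v i) (v d) := SimpleGraph.dist_comm
      omega
  have hw3W : w 3 ∈ Br G (v i) (w 1) := by
    rw [mem_Br]
    constructor
    · exact fun h => (hoff 3 (by omega) (by omega) i hid) h.symm
    · have h1 := dw 1 3 (by omega) (by omega)
      have e1 : G.dist (w 3) (w 1) = G.dist (w 1) (w 3) := SimpleGraph.dist_comm
      have e2 : G.dist (w 3) (v i) = G.dist (v i) (w 3) := SimpleGraph.dist_comm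
      omega
  -- distinctness of the three special neighbours
  have hAC : v (i - 1) ≠ v (i + 1) := by
    intro h
    have := hinj (i - 1) (by omega) (i + 1) (by omega) h
    omega
  have hAW : v (i - 1) ≠ w 1 := hoff 1 (by omega) (by omega) (i - 1) (by omega)
  have hCW : v (i + 1) ≠ w 1 := hoff 1 (by omega) (by omega) (i + 1) (by omega)
  -- families on each branch at v i
  have Hfam : ∀ c, G.Adj (v i) c → ∃ (f₀ : V → ℕ) (z : V), FamSpec G (v i) c f₀ z :=
    fun c hc => branch_family hT (Br G (v i) c).card (v i) c hc le_rfl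
  choose! F Z hFam using Hfam
  set nbrs : Finset V := G.neighborFinset (v i) with hnbrs
  have mem_nbrs : ∀ c, c ∈ nbrs ↔ G.Adj (v i) c := fun c => SimpleGraph.mem_neighborFinset G _ _
  set f₀ : V → ℕ := fun x => ∑ c ∈ nbrs, F c x with hf₀
  have hval_top : ∀ c, G.Adj (v i) c → ∀ x ∈ Br G (v i) c, f₀ x = F c x := by
    intro c hc x hx
    rw [hf₀]
    refine Finset.sum_eq_single_of_mem c ((mem_nbrs c).mpr hc) ?_
    intro c' hc' hcc'
    by_contra hF'
    have hadj' := (mem_nbrs c').mp hc'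
    obtain ⟨_, _, _, hsupp', _, _, _, _⟩ := hFam c' hadj'
    exact hcc' (branch_unique hT hadj' hc (hsupp' x hF') hx)
  have hsupp_top : ∀ x, f₀ x ≠ 0 → ∃ c, G.Adj (v i) c ∧ x ∈ Br G (v i) c := by
    intro x hx
    rw [hf₀] at hx
    obtain ⟨c, hc, hcv⟩ : ∃ c ∈ nbrs, F c x ≠ 0 := by
      by_contra hA
      push_neg at hA
      exact hx (Finset.sum_eq_zero hA)
    have hadj' := (mem_nbrs c).mp hc
    obtain ⟨_, _, _, hsupp', _, _, _, _⟩ := hFam c hadj'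
    exact ⟨c, hadj', hsupp' x hcv⟩
  have hcap_top : ∀ x, f₀ x ≤ G.dist (v i) x := by
    intro x
    by_cases hx : f₀ x = 0
    · omega
    · obtain ⟨c, hadj', hxBr⟩ := hsupp_top x hx
      obtain ⟨_, _, _, _, hcap', _, _, _⟩ := hFam c hadj'
      rw [hval_top c hadj' x hxBr]
      exact hcap' x
  -- f₀ is a dominating broadcast
  have hdom : IsDomBroadcast G f₀ := by
    constructor
    · intro x
      have h1 := hcap_top x
      have h2 : G.dist x (v i) ≤ ecc G x :=
        Finset.le_sup (f := fun u => G.dist x u) (Finset.mem_univ (v i))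
      have e1 : G.dist (v i) x = G.dist x (v i) := SimpleGraph.dist_comm
      omega
    · intro u
      by_cases hu : u = v i
      · obtain ⟨_, _, _, _, _, _, hcov', _⟩ := hFam (w 1) hW_adj
        obtain ⟨x, hx1, hx2⟩ := hcov' u (Or.inr hu)
        refine ⟨x, ?_, ?_⟩
        · calc 1 ≤ F (w 1) x := hx1
            _ ≤ f₀ x := Finset.single_le_sum (f := fun c => F c x)
                (fun c _ => Nat.zero_le _) ((mem_nbrs (w 1)).mpr hW_adj)
        · calc G.dist x u ≤ F (w 1) x := hx2
            _ ≤ f₀ x := Finset.single_le_sum (f := fun c => F c x)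
                (fun c _ => Nat.zero_le _) ((mem_nbrs (w 1)).mpr hW_adj)
      · obtain ⟨c, hcadj, hcBr⟩ := exists_branch hT hu
        obtain ⟨_, _, _, _, _, _, hcov', _⟩ := hFam c hcadj
        obtain ⟨x, hx1, hx2⟩ := hcov' u (Or.inl hcBr)
        refine ⟨x, ?_, ?_⟩
        · calc 1 ≤ F c x := hx1
            _ ≤ f₀ x := Finset.single_le_sum (f := fun c' => F c' x)
                (fun c' _ => Nat.zero_le _) ((mem_nbrs c).mpr hcadj)
        · calc G.dist x u ≤ F c x := hx2
            _ ≤ f₀ x := Finset.single_le_sum (f := fun c' => F c' x)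
                (fun c' _ => Nat.zero_le _) ((mem_nbrs c).mpr hcadj)
  -- minimise cost among dominating broadcasts below f₀
  set S : Set ℕ := {n | ∃ g : V → ℕ, (∀ x, g x ≤ f₀ x) ∧ IsDomBroadcast G g ∧ cost g = n}
    with hS
  have hSne : S.Nonempty := ⟨cost f₀, f₀, fun x => le_rfl, hdom, rfl⟩
  obtain ⟨g₁, hg₁le, hg₁dom, hg₁cost⟩ := Nat.sInf_mem hSne
  have hmin : IsMinDomBroadcast G g₁ := by
    refine ⟨hg₁dom, ?_⟩
    intro f' hf' hdomf'
    obtain ⟨hle, x₀, hlt⟩ := Pi.lt_def.mp hf'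
    have hstrict : cost f' < cost g₁ :=
      Finset.sum_lt_sum (fun x _ => hle x) ⟨x₀, Finset.mem_univ _, hlt⟩
    have hmem : cost f' ∈ S := ⟨f', fun x => le_trans (hle x) (hg₁le x), hdomf', rfl⟩
    have := Nat.sInf_le hmem
    omega
  -- lower bound on the cost of g₁
  have hcov : ∀ u, ∃ x, 1 ≤ g₁ x ∧ G.dist x u ≤ g₁ x := hg₁dom.2
  have hgsupp : ∀ x, g₁ x ≠ 0 → ∃ c, G.Adj (v i) c ∧ x ∈ Br G (v i) c := by
    intro x hx
    exact hsupp_top x (by have := hg₁le x; omega)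
  -- restriction of g₁ to a branch
  have hres : ∀ c, G.Adj (v i) c →
      (∀ x, (if x ∈ Br G (v i) c then g₁ x else 0) ≤ F c x) ∧
      (∀ u ∈ Br G (v i) c, ∃ x, 1 ≤ (if x ∈ Br G (v i) c then g₁ x else 0) ∧
        G.dist x u ≤ (if x ∈ Br G (v i) c then g₁ x else 0)) := by
    intro c hc
    constructor
    · intro x
      by_cases hx : x ∈ Br G (v i) c
      · simp only [hx, if_true]
        rw [← hval_top c hc x hx]
        exact hg₁le x
      · simp [hx]
    · intro u huBr
      obtain ⟨x, hx1, hx2⟩ := hcov u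
      obtain ⟨c'', hc''adj, hxBr⟩ := hgsupp x (by omega)
      have hcc'' : c'' = c := by
        by_contra hccne
        have huNot : u ∉ Br G (v i) c'' := by
          intro huIn
          exact hccne (branch_unique hT hc''adj hc huIn huBr)
        have hsep := separation hT hc''adj hxBr huNot
        have hcapx : g₁ x ≤ G.dist (v i) x := le_trans (hg₁le x) (hcap_top x)
        have hupos : 1 ≤ G.dist (v i) u := brPos hT huBr
        have e1 : G.dist x (v i) = G.dist (v i) x := SimpleGraph.dist_comm
        omega
      subst hcc''
      exact ⟨x, by simp only [hxBr, if_true]; exact hx1,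
        by simp only [hxBr, if_true]; exact hx2⟩
  -- per-branch cost lower bounds (Q3)
  have hQ3 : ∀ c, (hc : G.Adj (v i) c) →
      G.dist (v i) (Z c) ≤ (∑ x, (if x ∈ Br G (v i) c then g₁ x else 0)) + 1 := by
    intro c hc
    obtain ⟨_, _, _, _, _, _, _, hQ⟩ := hFam c hc
    exact (hQ (fun x => if x ∈ Br G (v i) c then g₁ x else 0) (hres c hc).1 (hres c hc).2).1
  -- deepest-vertex lower bounds
  have hZA : i ≤ G.dist (v i) (Z (v (i - 1))) := by
    obtain ⟨_, _, hdeep', _, _, _, _, _⟩ := hFam (v (i - 1)) hA_adj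
    have := hdeep' (v 0) hv0A
    have e1 : G.dist (v i) (v 0) = G.dist (v 0) (v i) := SimpleGraph.dist_comm
    omega
  have hZC : d - i ≤ G.dist (v i) (Z (v (i + 1))) := by
    obtain ⟨_, _, hdeep', _, _, _, _, _⟩ := hFam (v (i + 1)) hC_adj
    have := hdeep' (v d) hvdC
    omega
  have hZW : 3 ≤ G.dist (v i) (Z (w 1)) := by
    obtain ⟨_, _, hdeep', _, _, _, _, _⟩ := hFam (w 1) hW_adj
    have := hdeep' (w 3) hw3W
    omega
  -- the ball covering v i
  obtain ⟨xh, hxh1, hxh2⟩ := hcov (v i)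
  obtain ⟨ch, hchadj, hxhBr⟩ := hgsupp xh (by omega)
  have hQ4 : G.dist (v i) (Z ch) ≤ ∑ x, (if x ∈ Br G (v i) ch then g₁ x else 0) := by
    obtain ⟨_, _, _, _, _, _, _, hQ⟩ := hFam ch hchadj
    refine (hQ (fun x => if x ∈ Br G (v i) ch then g₁ x else 0)
      (hres ch hchadj).1 (hres ch hchadj).2).2 ⟨xh, ?_, ?_⟩
    · simp only [hxhBr, if_true]; exact hxh1
    · simp only [hxhBr, if_true]; exact hxh2
  have hZchpos : 1 ≤ G.dist (v i) (Z ch) := by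
    obtain ⟨hZBr, _, _, _, _, _, _, _⟩ := hFam ch hchadj
    exact brPos hT hZBr
  -- sums over disjoint branches
  have key : ∀ (T : Finset V), (∀ c ∈ T, G.Adj (v i) c) →
      (∑ c ∈ T, ∑ x, (if x ∈ Br G (v i) c then g₁ x else 0)) ≤ ∑ x, g₁ x := by
    intro T hT'
    rw [Finset.sum_comm]
    apply Finset.sum_le_sum
    intro x _
    by_cases hx : ∃ c₀ ∈ T, x ∈ Br G (v i) c₀
    · obtain ⟨c₀, hc₀T, hc₀x⟩ := hx
      rw [Finset.sum_eq_single_of_mem c₀ hc₀T]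
      · simp [hc₀x]
      · intro c' hc' hne'
        rw [if_neg]
        intro hx'
        exact hne' (branch_unique hT (hT' c' hc') (hT' c₀ hc₀T) hx' hc₀x)
    · push_neg at hx
      rw [Finset.sum_eq_zero]
      · exact Nat.zero_le _
      · intro c' hc'
        rw [if_neg (hx c' hc')]
  -- notation for the three principal sums
  set sA := ∑ x, (if x ∈ Br G (v i) (v (i - 1)) then g₁ x else 0) with hsA
  set sC := ∑ x, (if x ∈ Br G (v i) (v (i + 1)) then g₁ x else 0) with hsC
  set sW := ∑ x, (if x ∈ Br G (v i) (w 1) then g₁ x else 0) with hsW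
  set sX := ∑ x, (if x ∈ Br G (v i) ch then g₁ x else 0) with hsX
  have h3sum : sA + sC + sW ≤ ∑ x, g₁ x := by
    have hkey := key {v (i - 1), v (i + 1), w 1} (by
      intro c hc
      simp only [Finset.mem_insert, Finset.mem_singleton] at hc
      rcases hc with rfl | rfl | rfl
      · exact hA_adj
      · exact hC_adj
      · exact hW_adj)
    rw [Finset.sum_insert (by simp [hAC, hAW]),
      Finset.sum_insert (by simp [hCW]), Finset.sum_singleton] at hkey
    omega
  have hQ3A := hQ3 (v (i - 1)) hA_adj
  have hQ3C := hQ3 (v (i + 1)) hC_adj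
  have hQ3W := hQ3 (w 1) hW_adj
  have hfinal : d + 1 ≤ ∑ x, g₁ x := by
    by_cases hch1 : ch = v (i - 1)
    · subst hch1
      omega
    · by_cases hch2 : ch = v (i + 1)
      · subst hch2
        omega
      · by_cases hch3 : ch = w 1
        · subst hch3
          omega
        · -- fourth branch
          have h4sum : sX + (sA + sC + sW) ≤ ∑ x, g₁ x := by
            have hkey := key (insert ch {v (i - 1), v (i + 1), w 1}) (by
              intro c hc
              simp only [Finset.mem_insert, Finset.mem_singleton] at hc
              rcases hc with rfl | rfl | rfl | rfl
              · exact hchadj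
              · exact hA_adj
              · exact hC_adj
              · exact hW_adj)
            rw [Finset.sum_insert (by simp [hch1, hch2, hch3]),
              Finset.sum_insert (by simp [hAC, hAW]),
              Finset.sum_insert (by simp [hCW]), Finset.sum_singleton] at hkey
            omega
          omega
  -- conclude
  have hmem : cost g₁ ∈ {n | ∃ f : V → ℕ, IsMinDomBroadcast G f ∧ cost f = n} :=
    ⟨g₁, hmin, rfl⟩
  have hbdd : BddAbove {n | ∃ f : V → ℕ, IsMinDomBroadcast G f ∧ cost f = n} := by
    refine ⟨∑ x, ecc G x, ?_⟩
    rintro n ⟨f, hf, rfl⟩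
    exact Finset.sum_le_sum (fun x _ => hf.1.1 x)
  have hle := le_csSup hbdd hmem
  have hcost : d + 1 ≤ cost g₁ := hfinal
  rw [hdiam]
  calc d < d + 1 := by omega
    _ ≤ cost g₁ := hcost
    _ ≤ upperBroadcastNum G := hle



end AJC
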